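/- arXiv:1305.3771 — 4 statements merged into one kernel-verified Lean document; each statement's English description precedes it below -/
import Mathlib

section
/- ∫_{1/2}^∞ τ³ (tanh(π √(τ² − 1/4)) − 1) dτ = −17/960. -/
open Real MeasureTheory Set

lemma alt_hasSum {k : ℕ} {Z : ℝ} (hk : k ≠ 0)
    (h : HasSum (fun n : ℕ => 1 / (n : ℝ) ^ k) Z) :
    HasSum (fun n : ℕ => (-1 : ℝ) ^ n / ((n : ℝ) + 1) ^ k) (Z - 2 * (Z / 2 ^ k)) := by
  set f : ℕ → ℝ := fun n => 1 / (n : ℝ) ^ k with hf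
  set g : ℕ → ℝ := fun n => (-1 : ℝ) ^ n / ((n : ℝ) + 1) ^ k with hg
  have heven : HasSum (fun m : ℕ => f (2 * m)) (Z / 2 ^ k) := by
    have heq : (fun m : ℕ => f (2 * m)) = fun m => f m / 2 ^ k := by
      funext m; simp only [hf]; push_cast; rw [mul_pow]; ring
    rw [heq]; exact h.div_const _
  have hodd_sum : Summable (fun m : ℕ => f (2 * m + 1)) :=
    h.summable.comp_injective (fun a b hab => by omega)
  have hodd : HasSum (fun m : ℕ => f (2 * m + 1)) (Z - Z / 2 ^ k) := by
    have h2 := heven.even_add_odd hodd_sum.hasSum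
    have h3 := h.unique h2
    have h4 : ∑' m, f (2 * m + 1) = Z - Z / 2 ^ k := by linarith
    rw [← h4]; exact hodd_sum.hasSum
  have hshift : HasSum (fun n : ℕ => f (n + 1)) Z := by
    refine (hasSum_nat_add_iff 1).mpr ?_
    simpa [hf, hk] using h
  have hg_even : HasSum (fun m : ℕ => g (2 * m)) (Z - Z / 2 ^ k) := by
    have heq : (fun m : ℕ => g (2 * m)) = fun m => f (2 * m + 1) := by
      funext m; simp only [hf, hg]; push_cast; rw [pow_mul]; norm_num
    rw [heq]; exact hodd
  have hg_odd : HasSum (fun m : ℕ => g (2 * m + 1)) (-(Z / 2 ^ k)) := by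
    have h1 : HasSum (fun m : ℕ => (-(1 / (2:ℝ) ^ k)) * f (m + 1)) ((-(1 / (2:ℝ) ^ k)) * Z) :=
      hshift.mul_left _
    have heq : (fun m : ℕ => g (2 * m + 1)) = fun m => (-(1 / (2:ℝ) ^ k)) * f (m + 1) := by
      funext m; simp only [hf, hg]; push_cast
      rw [pow_succ, pow_mul]
      have h2 : ((2:ℝ) * m + 1 + 1) ^ k = 2 ^ k * ((m:ℝ) + 1) ^ k := by
        rw [← mul_pow]; ring_nf
      rw [h2]
      norm_num
      ring
    rw [heq]
    convert h1 using 1; ring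
  have hfin := hg_even.even_add_odd hg_odd
  convert hfin using 1
  ring

lemma eta_two : HasSum (fun n : ℕ => (-1 : ℝ) ^ n / ((n : ℝ) + 1) ^ 2) (π ^ 2 / 12) := by
  have := alt_hasSum two_ne_zero hasSum_zeta_two
  convert this using 1
  ring

lemma eta_four : HasSum (fun n : ℕ => (-1 : ℝ) ^ n / ((n : ℝ) + 1) ^ 4) (7 * π ^ 4 / 720) := by
  have := alt_hasSum four_ne_zero hasSum_zeta_four
  convert this using 1
  ring


lemma integrableOn_pow_mul_exp (k : ℕ) {a : ℝ} (ha : 0 < a) :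
    IntegrableOn (fun t : ℝ => t ^ k * exp (-(a * t))) (Ioi 0) := by
  have h := integrableOn_rpow_mul_exp_neg_mul_rpow (s := (k : ℝ)) (p := 1) (b := a)
    (lt_of_lt_of_le neg_one_lt_zero (Nat.cast_nonneg k)) one_pos ha
  simpa [Real.rpow_natCast, Real.rpow_one, neg_mul] using h

lemma integral_pow_mul_exp (k : ℕ) {a : ℝ} (ha : 0 < a) :
    ∫ t in Ioi (0:ℝ), t ^ k * exp (-(a * t)) = (Nat.factorial k : ℝ) / a ^ (k + 1) := by
  have h := integral_rpow_mul_exp_neg_mul_Ioi (a := (k : ℝ) + 1) (r := a) (by positivity) ha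
  rw [show ((k : ℝ) + 1) - 1 = (k : ℝ) by ring] at h
  rw [show ((k : ℝ) + 1) = ((k + 1 : ℕ) : ℝ) by push_cast; ring] at h
  rw [Real.rpow_natCast, show ((k + 1 : ℕ) : ℝ) = (k : ℝ) + 1 by push_cast; ring, Real.Gamma_nat_eq_factorial] at h
  have heq : ∫ t in Ioi (0:ℝ), t ^ k * exp (-(a * t))
      = ∫ t in Ioi (0:ℝ), t ^ (k : ℝ) * exp (-(a * t)) := by
    refine setIntegral_congr_fun measurableSet_Ioi (fun t ht => ?_)
    rw [Real.rpow_natCast]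
  rw [heq, h, one_div, inv_pow, div_eq_mul_inv, mul_comm]


lemma base_integrable {a : ℝ} (ha : 0 < a) :
    IntegrableOn (fun u : ℝ => (u ^ 3 + u / 4) * exp (-(a * u))) (Ioi 0) := by
  have h3 := integrableOn_pow_mul_exp 3 ha
  have h1 := (integrableOn_pow_mul_exp 1 ha).const_mul (1/4 : ℝ)
  have := h3.add h1
  refine IntegrableOn.congr_fun this (fun u _ => ?_) measurableSet_Ioi
  simp only [Pi.add_apply, pow_one]
  ring

lemma base_integral {a : ℝ} (ha : 0 < a) :
    ∫ u in Ioi (0:ℝ), (u ^ 3 + u / 4) * exp (-(a * u)) = 6 / a ^ 4 + 1 / (4 * a ^ 2) := by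
  have h3 := integrableOn_pow_mul_exp 3 ha
  have h1 := (integrableOn_pow_mul_exp 1 ha).const_mul (1/4 : ℝ)
  have heq : ∫ u in Ioi (0:ℝ), (u ^ 3 + u / 4) * exp (-(a * u))
      = ∫ u in Ioi (0:ℝ), (u ^ 3 * exp (-(a * u)) + (1/4) * (u ^ 1 * exp (-(a * u)))) := by
    refine setIntegral_congr_fun measurableSet_Ioi (fun u _ => ?_)
    simp only [pow_one]; ring
  rw [heq, integral_add h3 h1, MeasureTheory.integral_const_mul, integral_pow_mul_exp 3 ha,
    integral_pow_mul_exp 1 ha]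
  norm_num [Nat.factorial]
  ring

lemma tanh_sub_one {u : ℝ} (hu : 0 < u) :
    Real.tanh (π * u) - 1 = -2 * exp (-(2 * π * u)) * (1 + exp (-(2 * π * u)))⁻¹ := by
  have hx : 0 < π * u := mul_pos pi_pos hu
  rw [Real.tanh_eq_sinh_div_cosh, Real.sinh_eq, Real.cosh_eq]
  have hden : (exp (π * u) + exp (-(π * u))) / 2 ≠ 0 := by positivity
  have hden2 : (1 : ℝ) + exp (-(2 * π * u)) ≠ 0 := by positivity
  have hkey : exp (-(2 * π * u)) = exp (-(π * u)) * exp (-(π * u)) := by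
    rw [← Real.exp_add]; ring_nf
  have hinv : exp (-(π * u)) = (exp (π * u))⁻¹ := by
    rw [← Real.exp_neg]
  field_simp
  rw [show π * u * 2 = 2 * π * u by ring, hkey, hinv]
  field_simp
  ring


lemma summable_shift (k : ℕ) (hk : 1 < k) : Summable (fun n : ℕ => 1 / ((n : ℝ) + 1) ^ k) := by
  have h : Summable (fun n : ℕ => 1 / (n : ℝ) ^ k) := by
    rw [Real.summable_one_div_nat_pow]; exact hk
  have h2 := (summable_nat_add_iff 1).mpr h
  refine h2.congr (fun n => ?_)
  push_cast
  ring_nf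

lemma key : ∫ u in Ioi (0:ℝ), (u ^ 3 + u / 4) * (Real.tanh (π * u) - 1) = -17/960 := by
  set F : ℕ → ℝ → ℝ := fun n u =>
    (-2 * (-1) ^ n) * ((u ^ 3 + u / 4) * exp (-(2 * π * ((n : ℝ) + 1) * u))) with hF
  have ha : ∀ n : ℕ, (0:ℝ) < 2 * π * ((n : ℝ) + 1) := fun n => by positivity
  have hInt : ∀ n : ℕ, Integrable (F n) (volume.restrict (Ioi 0)) := fun n =>
    (base_integrable (ha n)).const_mul _
  have hIval : ∀ n : ℕ, ∫ u in Ioi (0:ℝ), F n u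
      = (-12/(16*π^4)) * ((-1:ℝ)^n/((n:ℝ)+1)^4) + (-1/(8*π^2)) * ((-1:ℝ)^n/((n:ℝ)+1)^2) := by
    intro n
    simp only [hF]
    rw [MeasureTheory.integral_const_mul, base_integral (ha n)]
    have hπ : π ≠ 0 := pi_ne_zero
    have hn : ((n:ℝ)+1) ≠ 0 := by positivity
    field_simp
    ring
  have hNval : ∀ n : ℕ, ∫ u in Ioi (0:ℝ), ‖F n u‖
      = 2 * (6 / (2*π*((n:ℝ)+1)) ^ 4 + 1 / (4 * (2*π*((n:ℝ)+1)) ^ 2)) := by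
    intro n
    rw [← base_integral (ha n), ← MeasureTheory.integral_const_mul]
    refine setIntegral_congr_fun measurableSet_Ioi (fun u hu => ?_)
    have hu' : (0:ℝ) < u := hu
    have hP : (0:ℝ) ≤ (u ^ 3 + u / 4) * exp (-(2 * π * ((n : ℝ) + 1) * u)) := by positivity
    simp only [hF, norm_mul, norm_neg, norm_pow, norm_one, Real.norm_eq_abs, abs_neg,
      abs_one, abs_two, one_pow, Real.abs_exp]
    rw [abs_of_nonneg (show (0:ℝ) ≤ u ^ 3 + u / 4 by positivity)]
    ring
  have hSum : Summable (fun n : ℕ => ∫ u in Ioi (0:ℝ), ‖F n u‖) := by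
    have h4 := (summable_shift 4 (by norm_num)).mul_left (12/(2*π)^4)
    have h2 := (summable_shift 2 (by norm_num)).mul_left (1/(2*(2*π)^2))
    refine (h4.add h2).congr (fun n => ?_)
    rw [hNval n]
    have hπ : π ≠ 0 := pi_ne_zero
    have hn : ((n:ℝ)+1) ≠ 0 := by positivity
    field_simp
    ring
  have hex := MeasureTheory.integral_tsum_of_summable_integral_norm hInt hSum
  -- LHS value
  have hs : HasSum (fun n : ℕ => ∫ u in Ioi (0:ℝ), F n u) (-17/960 : ℝ) := by
    have h := (eta_four.mul_left (-12/(16*π^4))).add (eta_two.mul_left (-1/(8*π^2)))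
    have hval : (-12/(16*π^4)) * (7 * π ^ 4 / 720) + (-1/(8*π^2)) * (π ^ 2 / 12) = (-17/960 : ℝ) := by
      have hπ : π ≠ 0 := pi_ne_zero
      field_simp
      ring
    rw [hval] at h
    exact h.congr_fun (fun n => hIval n)
  rw [hs.tsum_eq] at hex
  have hpt : ∀ u ∈ Ioi (0:ℝ), (u ^ 3 + u / 4) * (Real.tanh (π * u) - 1) = ∑' n, F n u := by
    intro u hu
    have hu' : (0:ℝ) < u := hu
    set q : ℝ := exp (-(2 * π * u)) with hq
    have hq0 : 0 < q := exp_pos _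
    have hq1 : q < 1 := by
      rw [hq, Real.exp_lt_one_iff]
      have : 0 < 2 * π * u := by positivity
      linarith
    have hnorm : ‖-q‖ < 1 := by
      rw [norm_neg, Real.norm_eq_abs, abs_of_pos hq0]; exact hq1
    have hgeo := hasSum_geometric_of_norm_lt_one hnorm
    have hmul := hgeo.mul_left ((-2) * (u ^ 3 + u / 4) * q)
    have hFn : ∀ n : ℕ, F n u = ((-2) * (u ^ 3 + u / 4) * q) * (-q) ^ n := by
      intro n
      have hexp : exp (-(2 * π * ((n : ℝ) + 1) * u)) = q ^ (n + 1) := by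
        rw [hq, ← Real.exp_nat_mul]
        congr 1
        push_cast
        ring
      show -2 * (-1) ^ n * ((u ^ 3 + u / 4) * exp (-(2 * π * ((n : ℝ) + 1) * u)))
          = (-2) * (u ^ 3 + u / 4) * q * (-q) ^ n
      rw [hexp, neg_pow]
      ring
    have htsum : ∑' n, F n u = ((-2) * (u ^ 3 + u / 4) * q) * (1 - (-q))⁻¹ :=
      (hmul.congr_fun (fun n => (hFn n))).tsum_eq
    rw [htsum, sub_neg_eq_add, tanh_sub_one hu']
    ring
  rw [setIntegral_congr_fun measurableSet_Ioi hpt, ← hex]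


theorem integral_tanh_cubed :
    ∫ τ in Set.Ioi (1/2 : ℝ),
      τ ^ 3 * (Real.tanh (π * Real.sqrt (τ ^ 2 - 1/4)) - 1) = -17/960 := by
  set φ : ℝ → ℝ := fun x => Real.sqrt (x ^ 2 + 1/4) with hφ
  have himg : φ '' Ioi (0:ℝ) = Ioi (1/2 : ℝ) := by
    ext τ
    constructor
    · rintro ⟨x, hx, rfl⟩
      have hx' : (0:ℝ) < x := hx
      have h14 : (1/2 : ℝ) = Real.sqrt (1/4) := by
        rw [show (1/4:ℝ) = (1/2)^2 by norm_num, Real.sqrt_sq (by norm_num)]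
      simp only [hφ, Set.mem_Ioi]
      rw [h14]
      exact Real.sqrt_lt_sqrt (by norm_num) (by nlinarith)
    · intro hτ
      have hτ' : (1/2 : ℝ) < τ := hτ
      refine ⟨Real.sqrt (τ ^ 2 - 1/4), ?_, ?_⟩
      · simp only [Set.mem_Ioi]
        exact Real.sqrt_pos.mpr (by nlinarith)
      · simp only [hφ]
        rw [Real.sq_sqrt (by nlinarith : (0:ℝ) ≤ τ ^ 2 - 1/4)]
        rw [show τ ^ 2 - 1/4 + 1/4 = τ ^ 2 by ring, Real.sqrt_sq (by linarith)]
  have hderiv : ∀ x ∈ Ioi (0:ℝ), HasDerivWithinAt φ (x / Real.sqrt (x ^ 2 + 1/4)) (Ioi 0) x := by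
    intro x hx
    have hne : x ^ 2 + 1/4 ≠ 0 := by positivity
    have h1 : HasDerivAt (fun x : ℝ => x ^ 2 + 1/4) (2 * x) x := by
      simpa using (hasDerivAt_pow 2 x).add_const (1/4 : ℝ)
    have h2 := (Real.hasDerivAt_sqrt hne).comp x h1
    refine HasDerivWithinAt.congr_deriv h2.hasDerivWithinAt ?_
    ring
  have hinj : Set.InjOn φ (Ioi 0) := by
    intro x hx y hy hxy
    have hx' : (0:ℝ) < x := hx
    have hy' : (0:ℝ) < y := hy
    simp only [hφ] at hxy
    have h2 : x ^ 2 + 1/4 = y ^ 2 + 1/4 := by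
      have := (Real.sqrt_inj (by positivity) (by positivity)).mp hxy
      exact this
    nlinarith
  have hcv := integral_image_eq_integral_abs_deriv_smul measurableSet_Ioi hderiv hinj
    (fun τ : ℝ => τ ^ 3 * (Real.tanh (π * Real.sqrt (τ ^ 2 - 1/4)) - 1))
  rw [himg] at hcv
  rw [hcv, ← key]
  refine setIntegral_congr_fun measurableSet_Ioi (fun x hx => ?_)
  have hx' : (0:ℝ) < x := hx
  have hs : (0:ℝ) < Real.sqrt (x ^ 2 + 1/4) := Real.sqrt_pos.mpr (by positivity)
  have hsq : (Real.sqrt (x ^ 2 + 1/4)) ^ 2 = x ^ 2 + 1/4 :=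
    Real.sq_sqrt (by positivity)
  have hinner : Real.sqrt ((φ x) ^ 2 - 1/4) = x := by
    simp only [hφ]
    rw [hsq, show x ^ 2 + 1/4 - 1/4 = x ^ 2 by ring, Real.sqrt_sq hx'.le]
  simp only [smul_eq_mul, hφ] at hinner ⊢
  rw [hinner]
  rw [abs_of_pos (div_pos hx' hs)]
  have hcube : (Real.sqrt (x ^ 2 + 1/4)) ^ 3 = (x ^ 2 + 1/4) * Real.sqrt (x ^ 2 + 1/4) := by
    rw [pow_succ, hsq]
  rw [hcube]
  field_simp
end

section
/- ∫_{1/2}^∞ τ⁵ (tanh(π √(τ² − 1/4)) − 1) dτ = −407/40320. -/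
open Real MeasureTheory Set

theorem my_bernoulli'_five : bernoulli' 5 = 0 := by
  have h1 : Nat.choose 5 2 = 10 := by decide
  have h2 : Nat.choose 5 3 = 10 := by decide
  rw [bernoulli'_def]
  norm_num [Finset.sum_range_succ, Finset.sum_range_zero, h1, h2]

theorem my_bernoulli'_six : bernoulli' 6 = 1/42 := by
  have h1 : Nat.choose 6 2 = 15 := by decide
  have h2 : Nat.choose 6 3 = 20 := by decide
  have h3 : Nat.choose 6 4 = 15 := by decide
  rw [bernoulli'_def]
  norm_num [Finset.sum_range_succ, Finset.sum_range_zero, my_bernoulli'_five, h1, h2, h3]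

theorem hasSum_zeta_six : HasSum (fun n : ℕ => (1 : ℝ) / (n : ℝ) ^ 6) (π ^ 6 / 945) := by
  convert hasSum_zeta_nat (k := 3) (by norm_num) using 1
  rw [bernoulli_eq_bernoulli'_of_ne_one (by norm_num), my_bernoulli'_six]
  have : ((1/42 : ℚ) : ℝ) = 1/42 := by norm_num
  rw [this]
  rw [show Nat.factorial 6 = 720 from by decide]
  norm_num
  ring

theorem hasSum_shift {k : ℕ} (hk : k ≠ 0) {z : ℝ}
    (hz : HasSum (fun n : ℕ => 1 / (n : ℝ) ^ k) z) :
    HasSum (fun n : ℕ => 1 / ((n : ℝ) + 1) ^ k) z := by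
  have h := (hasSum_nat_add_iff' (f := fun n : ℕ => 1 / (n : ℝ) ^ k) 1).mpr hz
  simp only [Finset.range_one, Finset.sum_singleton, Nat.cast_zero, zero_pow hk, div_zero,
    sub_zero, Nat.cast_add, Nat.cast_one] at h
  exact h

set_option maxHeartbeats 800000 in
theorem hasSum_alt {k : ℕ} {z : ℝ}
    (hz : HasSum (fun n : ℕ => 1 / ((n : ℝ) + 1) ^ k) z) :
    HasSum (fun n : ℕ => (-1) ^ n / ((n : ℝ) + 1) ^ k) ((1 - 2 / 2 ^ k) * z) := by
  have hodd : HasSum (fun m : ℕ => 1 / (((2 * m + 1 : ℕ) : ℝ) + 1) ^ k) (z / 2 ^ k) := by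
    have h := hz.mul_left (1 / 2 ^ k)
    have he : (fun m : ℕ => 1 / (((2 * m + 1 : ℕ) : ℝ) + 1) ^ k)
        = fun m : ℕ => 1 / 2 ^ k * (1 / ((m : ℝ) + 1) ^ k) := by
      funext m
      rw [div_mul_div_comm, one_mul, ← mul_pow]
      congr 2
      push_cast; ring
    rw [he]
    convert h using 1
    rfl
    ring
  obtain ⟨e, he⟩ := (hz.summable.comp_injective
    (fun a b h => by simpa using h : Function.Injective (fun m : ℕ => 2 * m)))
  have he' : HasSum (fun m : ℕ => 1 / (((2 * m : ℕ) : ℝ) + 1) ^ k) e := he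
  have hsum : HasSum (fun n : ℕ => 1 / ((n : ℝ) + 1) ^ k) (e + z / 2 ^ k) :=
    HasSum.even_add_odd (f := fun n : ℕ => 1 / ((n : ℝ) + 1) ^ k) he' hodd
  have hez : e = z - z / 2 ^ k := by
    have := hz.unique hsum; linarith
  have heven2 : HasSum (fun m : ℕ => (-1 : ℝ) ^ (2 * m) / (((2 * m : ℕ) : ℝ) + 1) ^ k) e := by
    convert he' using 2 with m
    rw [pow_mul]
    norm_num
  have hodd2 : HasSum (fun m : ℕ => (-1 : ℝ) ^ (2 * m + 1) / (((2 * m + 1 : ℕ) : ℝ) + 1) ^ k)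
      (-(z / 2 ^ k)) := by
    convert hodd.neg using 2 with m
    rfl
    rw [pow_succ, pow_mul]
    norm_num [neg_div]
  have h := HasSum.even_add_odd (f := fun n : ℕ => (-1 : ℝ) ^ n / ((n : ℝ) + 1) ^ k)
    heven2 hodd2
  convert h using 1
  rw [hez]; ring

theorem tanh_sub_one_s3 (x : ℝ) : Real.tanh x - 1 = -2 / (Real.exp (2 * x) + 1) := by
  rw [Real.tanh_eq_sinh_div_cosh, Real.sinh_eq, Real.cosh_eq, Real.exp_neg,
    show 2 * x = x + x by ring, Real.exp_add]
  have h3 : Real.exp x ≠ 0 := (Real.exp_pos x).ne'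
  have h4 : Real.exp x + (Real.exp x)⁻¹ ≠ 0 := by positivity
  have h5 : Real.exp x * Real.exp x + 1 ≠ 0 := by positivity
  field_simp
  ring

theorem hasSum_alt_exp {c t : ℝ} (hc : 0 < c) (ht : 0 < t) :
    HasSum (fun n : ℕ => (-1 : ℝ) ^ n * Real.exp (-(c * (n + 1) * t)))
      (1 / (Real.exp (c * t) + 1)) := by
  set x := Real.exp (-(c * t)) with hx
  have hx0 : 0 < x := Real.exp_pos _
  have hx1 : x < 1 := by
    rw [hx, Real.exp_lt_one_iff]
    nlinarith
  have hg : HasSum (fun n : ℕ => (-x) ^ n) (1 - -x)⁻¹ :=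
    hasSum_geometric_of_norm_lt_one (by rw [norm_neg, Real.norm_eq_abs, abs_of_pos hx0]; exact hx1)
  have h := hg.mul_left x
  have he : (fun n : ℕ => x * (-x) ^ n)
      = fun n : ℕ => (-1 : ℝ) ^ n * Real.exp (-(c * (n + 1) * t)) := by
    funext n
    rw [neg_pow, show Real.exp (-(c * (n + 1) * t)) = x ^ (n + 1) by
      rw [hx, ← Real.exp_nat_mul]
      · congr 1
        push_cast
        ring]
    rw [pow_succ]
    ring
  rw [he] at h
  convert h using 1
  rfl
  have hect : Real.exp (c * t) * x = 1 := by
    rw [hx, ← Real.exp_add]; simp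
  rw [sub_neg_eq_add, ← div_eq_mul_inv, div_eq_div_iff (by positivity) (by positivity)]
  nlinarith [Real.exp_pos (c * t)]


theorem integrable_pow_exp (n : ℕ) {c : ℝ} (hc : 0 < c) :
    IntegrableOn (fun t : ℝ => t ^ n * Real.exp (-(c * t))) (Ioi 0) := by
  have h := integrableOn_rpow_mul_exp_neg_mul_rpow (p := 1) (s := n) (b := c)
    (lt_of_lt_of_le neg_one_lt_zero (Nat.cast_nonneg n)) zero_lt_one hc
  refine h.congr_fun (fun t ht => ?_) measurableSet_Ioi
  dsimp only
  rw [Real.rpow_one, Real.rpow_natCast, neg_mul]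

theorem integral_pow_exp (n : ℕ) {c : ℝ} (hc : 0 < c) :
    ∫ t in Ioi (0:ℝ), t ^ n * Real.exp (-(c * t)) = n.factorial / c ^ (n + 1) := by
  have h := Real.integral_rpow_mul_exp_neg_mul_Ioi (a := (n : ℝ) + 1) (r := c)
    (by positivity) hc
  simp only [add_sub_cancel_right] at h
  rw [Real.Gamma_nat_eq_factorial] at h
  rw [show (∫ t in Ioi (0:ℝ), t ^ n * Real.exp (-(c * t)))
      = ∫ t in Ioi (0:ℝ), t ^ ((n : ℝ)) * Real.exp (-(c * t)) from
    setIntegral_congr_fun measurableSet_Ioi (fun t ht => by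
      rw [Real.rpow_natCast]), h]
  rw [div_rpow one_pos.le hc.le, Real.one_rpow, ← Real.rpow_natCast c (n+1)]
  push_cast
  rw [div_mul_eq_mul_div, one_mul]

theorem integrable_p_exp {c : ℝ} (hc : 0 < c) :
    IntegrableOn (fun t : ℝ => (t ^ 5 + t ^ 3 / 2 + t / 16) * Real.exp (-(c * t))) (Ioi 0) := by
  have h5 := integrable_pow_exp 5 hc
  have h3 : IntegrableOn (fun t : ℝ => 1/2 * (t ^ 3 * Real.exp (-(c * t)))) (Ioi 0) :=
    (integrable_pow_exp 3 hc).const_mul _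
  have h1 : IntegrableOn (fun t : ℝ => 1/16 * (t ^ 1 * Real.exp (-(c * t)))) (Ioi 0) :=
    (integrable_pow_exp 1 hc).const_mul _
  have h53 : IntegrableOn (fun t : ℝ => t ^ 5 * Real.exp (-(c * t))
      + 1/2 * (t ^ 3 * Real.exp (-(c * t)))) (Ioi 0) := h5.add h3
  have h531 : IntegrableOn (fun t : ℝ => t ^ 5 * Real.exp (-(c * t))
      + 1/2 * (t ^ 3 * Real.exp (-(c * t))) + 1/16 * (t ^ 1 * Real.exp (-(c * t)))) (Ioi 0) :=
    h53.add h1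
  exact h531.congr_fun (fun t ht => by ring) measurableSet_Ioi

theorem integral_p_exp {c : ℝ} (hc : 0 < c) :
    ∫ t in Ioi (0:ℝ), (t ^ 5 + t ^ 3 / 2 + t / 16) * Real.exp (-(c * t))
      = 120 / c ^ 6 + 3 / c ^ 4 + 1 / (16 * c ^ 2) := by
  have h5 := integrable_pow_exp 5 hc
  have h3 : IntegrableOn (fun t : ℝ => 1/2 * (t ^ 3 * Real.exp (-(c * t)))) (Ioi 0) :=
    (integrable_pow_exp 3 hc).const_mul _
  have h1 : IntegrableOn (fun t : ℝ => 1/16 * (t ^ 1 * Real.exp (-(c * t)))) (Ioi 0) :=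
    (integrable_pow_exp 1 hc).const_mul _
  have h53 : IntegrableOn (fun t : ℝ => t ^ 5 * Real.exp (-(c * t))
      + 1/2 * (t ^ 3 * Real.exp (-(c * t)))) (Ioi 0) := h5.add h3
  have e1 : (∫ t in Ioi (0:ℝ), (t ^ 5 + t ^ 3 / 2 + t / 16) * Real.exp (-(c * t)))
      = ∫ t in Ioi (0:ℝ), (t ^ 5 * Real.exp (-(c * t)) + 1/2 * (t ^ 3 * Real.exp (-(c * t)))
        + 1/16 * (t ^ 1 * Real.exp (-(c * t)))) :=
    setIntegral_congr_fun measurableSet_Ioi (fun t ht => by ring)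
  rw [e1, integral_add h53 h1, integral_add h5 h3, MeasureTheory.integral_const_mul,
    MeasureTheory.integral_const_mul,
    integral_pow_exp 5 hc, integral_pow_exp 3 hc, integral_pow_exp 1 hc]
  norm_num [Nat.factorial]
  ring

noncomputable def Fc (n : ℕ) (t : ℝ) : ℝ :=
  (-2 * (-1) ^ n) * ((t ^ 5 + t ^ 3 / 2 + t / 16) * Real.exp (-(2 * π * ((n : ℝ) + 1) * t)))

theorem cn_pos (n : ℕ) : 0 < 2 * π * ((n : ℝ) + 1) := by positivity

theorem Fc_integrable (n : ℕ) : IntegrableOn (Fc n) (Ioi 0) :=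
  (integrable_p_exp (cn_pos n)).const_mul _

theorem np1_ne (n : ℕ) : ((n : ℝ) + 1) ≠ 0 := by positivity

theorem Fc_integral (n : ℕ) : (∫ t in Ioi (0:ℝ), Fc n t)
    = (-240 / (2 * π) ^ 6) * ((-1) ^ n / ((n : ℝ) + 1) ^ 6)
      + (-6 / (2 * π) ^ 4) * ((-1) ^ n / ((n : ℝ) + 1) ^ 4)
      + (-1 / (8 * (2 * π) ^ 2)) * ((-1) ^ n / ((n : ℝ) + 1) ^ 2) := by
  unfold Fc
  rw [MeasureTheory.integral_const_mul, integral_p_exp (cn_pos n)]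
  have h1 : ((n : ℝ) + 1) ≠ 0 := np1_ne n
  have h2 : π ≠ 0 := Real.pi_ne_zero
  field_simp
  ring

theorem Fc_norm_integral (n : ℕ) : (∫ t in Ioi (0:ℝ), ‖Fc n t‖)
    = (240 / (2 * π) ^ 6) * (1 / ((n : ℝ) + 1) ^ 6)
      + (6 / (2 * π) ^ 4) * (1 / ((n : ℝ) + 1) ^ 4)
      + (1 / (8 * (2 * π) ^ 2)) * (1 / ((n : ℝ) + 1) ^ 2) := by
  have e1 : (∫ t in Ioi (0:ℝ), ‖Fc n t‖)
      = ∫ t in Ioi (0:ℝ), 2 * ((t ^ 5 + t ^ 3 / 2 + t / 16)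
          * Real.exp (-(2 * π * ((n : ℝ) + 1) * t))) := by
    apply setIntegral_congr_fun measurableSet_Ioi
    intro t ht
    have ht' : 0 < t := ht
    unfold Fc
    dsimp only
    rw [Real.norm_eq_abs, abs_mul, abs_mul, abs_mul,
      abs_of_nonneg (by positivity : (0:ℝ) ≤ t ^ 5 + t ^ 3 / 2 + t / 16),
      abs_of_nonneg (Real.exp_nonneg _), abs_neg, abs_pow, abs_neg, abs_one, one_pow]
    norm_num
  rw [e1, MeasureTheory.integral_const_mul, integral_p_exp (cn_pos n)]
  have h1 : ((n : ℝ) + 1) ≠ 0 := np1_ne n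
  have h2 : π ≠ 0 := Real.pi_ne_zero
  field_simp
  ring


theorem main_t :
    (∫ t in Ioi (0:ℝ), t * (t ^ 2 + 1/4) ^ 2 * (Real.tanh (π * t) - 1)) = -407/40320 := by
  -- zeta-based sums
  have hz2 := hasSum_shift two_ne_zero hasSum_zeta_two
  have hz4 := hasSum_shift (by norm_num : (4:ℕ) ≠ 0) hasSum_zeta_four
  have hz6 := hasSum_shift (by norm_num : (6:ℕ) ≠ 0) hasSum_zeta_six
  -- summability of the norm bounds
  have hB : Summable (fun n : ℕ => (240 / (2 * π) ^ 6) * (1 / ((n : ℝ) + 1) ^ 6)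
      + (6 / (2 * π) ^ 4) * (1 / ((n : ℝ) + 1) ^ 4)
      + (1 / (8 * (2 * π) ^ 2)) * (1 / ((n : ℝ) + 1) ^ 2)) :=
    ((hz6.summable.mul_left _).add (hz4.summable.mul_left _)).add (hz2.summable.mul_left _)
  -- the lintegral bound
  have hlin : (∑' n : ℕ, ∫⁻ t in Ioi (0:ℝ), ‖Fc n t‖₊) ≠ ⊤ := by
    have heq : ∀ n : ℕ, (∫⁻ t in Ioi (0:ℝ), ‖Fc n t‖₊)
        = ENNReal.ofReal ((240 / (2 * π) ^ 6) * (1 / ((n : ℝ) + 1) ^ 6)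
          + (6 / (2 * π) ^ 4) * (1 / ((n : ℝ) + 1) ^ 4)
          + (1 / (8 * (2 * π) ^ 2)) * (1 / ((n : ℝ) + 1) ^ 2)) := by
      intro n
      show (∫⁻ t in Ioi (0:ℝ), ‖Fc n t‖ₑ) = _
      rw [← MeasureTheory.ofReal_integral_norm_eq_lintegral_enorm (Fc_integrable n),
        Fc_norm_integral n]
    rw [tsum_congr heq, ← ENNReal.ofReal_tsum_of_nonneg (fun n => by positivity) hB]
    exact ENNReal.ofReal_ne_top
  -- swap integral and sum
  have hswap := MeasureTheory.integral_tsum (μ := volume.restrict (Ioi 0))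
    (f := fun n t => Fc n t) (fun n => (Fc_integrable n).aestronglyMeasurable) hlin
  -- pointwise identification of the integrand with the series
  have hpt : ∀ t ∈ Ioi (0:ℝ),
      t * (t ^ 2 + 1/4) ^ 2 * (Real.tanh (π * t) - 1) = ∑' n : ℕ, Fc n t := by
    intro t ht
    have ht' : (0:ℝ) < t := ht
    have h := (hasSum_alt_exp (c := 2 * π) (by positivity) ht').mul_left
      (-2 * (t ^ 5 + t ^ 3 / 2 + t / 16))
    have he : (fun n : ℕ => (-2 * (t ^ 5 + t ^ 3 / 2 + t / 16))
        * ((-1 : ℝ) ^ n * Real.exp (-(2 * π * ((n : ℝ) + 1) * t)))) = fun n => Fc n t := by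
      funext n; unfold Fc; ring
    rw [he] at h
    rw [h.tsum_eq, tanh_sub_one_s3 (π * t), show 2 * (π * t) = 2 * π * t by ring]
    have hE : Real.exp (2 * π * t) + 1 ≠ 0 := by positivity
    field_simp
    ring
  -- evaluate the sum of the integrals
  have h6 := (hasSum_alt hz6).mul_left (-240 / (2 * π) ^ 6)
  have h4 := (hasSum_alt hz4).mul_left (-6 / (2 * π) ^ 4)
  have h2 := (hasSum_alt hz2).mul_left (-1 / (8 * (2 * π) ^ 2))
  have hS := (h6.add h4).add h2
  rw [setIntegral_congr_fun measurableSet_Ioi hpt, hswap, tsum_congr Fc_integral, hS.tsum_eq]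
  have hπ : π ≠ 0 := Real.pi_ne_zero
  field_simp
  ring


theorem cov : (∫ t in Ioi (0:ℝ), t * (t^2 + 1/4)^2 * (Real.tanh (π * t) - 1))
    = ∫ τ in Ioi (1/2:ℝ), τ ^ 5 * (Real.tanh (π * Real.sqrt (τ ^ 2 - 1/4)) - 1) := by
  have hpos : ∀ τ : ℝ, τ ∈ Ioi (1/2:ℝ) → 0 < τ ^ 2 - 1/4 := by
    intro τ hτ; simp only [Set.mem_Ioi] at hτ; nlinarith
  have himg : (fun τ : ℝ => Real.sqrt (τ ^ 2 - 1/4)) '' (Ioi (1/2)) = Ioi 0 := by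
    ext t
    constructor
    · rintro ⟨τ, hτ, rfl⟩
      exact Set.mem_Ioi.mpr (Real.sqrt_pos.mpr (hpos τ hτ))
    · intro ht
      simp only [Set.mem_Ioi] at ht
      refine ⟨Real.sqrt (t ^ 2 + 1/4), ?_, ?_⟩
      · simp only [Set.mem_Ioi]
        rw [show (1/2 : ℝ) = Real.sqrt (1/4) by
          rw [show (1/4 : ℝ) = (1/2)^2 by norm_num, Real.sqrt_sq (by norm_num)]]
        exact Real.sqrt_lt_sqrt (by norm_num) (by nlinarith)
      · show Real.sqrt (Real.sqrt (t ^ 2 + 1/4) ^ 2 - 1/4) = t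
        rw [Real.sq_sqrt (by positivity)]
        simp only [add_sub_cancel_right]
        exact Real.sqrt_sq ht.le
  have hderiv : ∀ τ ∈ Ioi (1/2:ℝ), HasDerivWithinAt (fun τ : ℝ => Real.sqrt (τ ^ 2 - 1/4))
      (τ / Real.sqrt (τ ^ 2 - 1/4)) (Ioi (1/2)) τ := by
    intro τ hτ
    have h1 : HasDerivAt (fun τ : ℝ => τ ^ 2 - 1/4) (2 * τ) τ := by
      simpa using (hasDerivAt_pow 2 τ).sub_const (1/4)
    have h2 := (Real.hasDerivAt_sqrt (hpos τ hτ).ne').comp τ h1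
    have hs : Real.sqrt (τ ^ 2 - 1/4) ≠ 0 := (Real.sqrt_pos.mpr (hpos τ hτ)).ne'
    have key : ∀ s u : ℝ, s ≠ 0 → 1 / (2 * s) * (2 * u) = u / s := by
      intro s u hsne; field_simp
    have : 1 / (2 * Real.sqrt (τ ^ 2 - 1/4)) * (2 * τ) = τ / Real.sqrt (τ ^ 2 - 1/4) :=
      key _ _ hs
    rw [this] at h2
    exact h2.hasDerivWithinAt
  have hinj : InjOn (fun τ : ℝ => Real.sqrt (τ ^ 2 - 1/4)) (Ioi (1/2)) := by
    apply StrictMonoOn.injOn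
    intro a ha b hb hab
    simp only [Set.mem_Ioi] at ha hb
    exact Real.sqrt_lt_sqrt (hpos a ha).le (by nlinarith)
  rw [← himg, integral_image_eq_integral_abs_deriv_smul measurableSet_Ioi hderiv hinj]
  apply setIntegral_congr_fun measurableSet_Ioi
  intro τ hτ
  have h0 := hpos τ hτ
  have hτ2 : (0:ℝ) < τ := lt_trans (by norm_num) (Set.mem_Ioi.mp hτ)
  have hs : 0 < Real.sqrt (τ ^ 2 - 1/4) := Real.sqrt_pos.mpr h0
  dsimp only
  rw [Real.sq_sqrt h0.le, show τ ^ 2 - 1/4 + 1/4 = τ ^ 2 by ring]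
  set s := Real.sqrt (τ ^ 2 - 1/4) with hsdef
  rw [smul_eq_mul, abs_of_pos (by positivity)]
  have hsne : s ≠ 0 := hs.ne'
  field_simp


theorem integral_tanh_fifth :
    ∫ τ in Set.Ioi (1/2 : ℝ),
      τ ^ 5 * (Real.tanh (π * Real.sqrt (τ ^ 2 - 1/4)) - 1) = -407/40320 := by
  rw [← cov]
  exact main_t
end

section
/- Let n ≥ 2 be an integer and define γ: ℂ → ℝ by γ(t) = (1 + |√(t² + (n−1)²/4)|)/(1 + |t|), with the principal-type branch of square root specified so that the expression is continuous. Then inf_{t ∈ ℂ} γ(t) = 2/(n+1), attained at t = i(n−1)/2, and sup_{t∈ℂ} γ(t) = (n+1)/2, attained at t = 0. -/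
open Complex

/-- The function γ(t) = (1 + |√(t² + (n−1)²/4)|)/(1 + |t|) on ℂ (the modulus of the
square root is branch-independent, equal to |t² + (n−1)²/4|^{1/2}). Its infimum is
2/(n+1), attained at t = i(n−1)/2, and its supremum is (n+1)/2, attained at t = 0. -/
theorem gamma_inf_sup (n : ℕ) (hn : 2 ≤ n) :
    (∀ t : ℂ,
      2 / ((n : ℝ) + 1) ≤
        (1 + Real.sqrt (‖(t ^ 2 + ((n : ℂ) - 1) ^ 2 / 4)‖)) /
          (1 + ‖t‖)) ∧
    ((1 + Real.sqrt (‖((Complex.I * ((n : ℂ) - 1) / 2) ^ 2 +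
          ((n : ℂ) - 1) ^ 2 / 4)‖)) /
        (1 + ‖(Complex.I * ((n : ℂ) - 1) / 2)‖) = 2 / ((n : ℝ) + 1)) ∧
    (∀ t : ℂ,
      (1 + Real.sqrt (‖(t ^ 2 + ((n : ℂ) - 1) ^ 2 / 4)‖)) /
          (1 + ‖t‖) ≤ ((n : ℝ) + 1) / 2) ∧
    ((1 + Real.sqrt (‖((0 : ℂ) ^ 2 + ((n : ℂ) - 1) ^ 2 / 4)‖)) /
        (1 + ‖(0 : ℂ)‖) = ((n : ℝ) + 1) / 2) := by
  have hn1 : (1 : ℝ) ≤ (n : ℝ) - 1 := by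
    have : (2 : ℝ) ≤ (n : ℝ) := by exact_mod_cast hn
    linarith
  set c : ℝ := ((n : ℝ) - 1) / 2 with hc
  have hc0 : 0 ≤ c := by positivity
  have hcc : ((n : ℂ) - 1) = 2 * (c : ℂ) := by
    push_cast [hc]; ring
  have habsC : ‖((n : ℂ) - 1) ^ 2 / 4‖ = c ^ 2 := by
    rw [hcc]
    have : (2 * (c : ℂ)) ^ 2 / 4 = ((c : ℂ)) ^ 2 := by ring
    rw [this, norm_pow, Complex.norm_real, Real.norm_eq_abs, _root_.abs_of_nonneg hc0]
  have hnp1 : (n : ℝ) + 1 = 2 * (1 + c) := by rw [hc]; ring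
  refine ⟨?_, ?_, ?_, ?_⟩
  · -- lower bound
    intro t
    set a : ℝ := ‖t‖ with ha
    have ha0 : 0 ≤ a := norm_nonneg t
    set s : ℝ := Real.sqrt (‖t ^ 2 + ((n : ℂ) - 1) ^ 2 / 4‖) with hs
    have hs0 : 0 ≤ s := Real.sqrt_nonneg _
    have hsq : a ^ 2 - c ^ 2 ≤ s ^ 2 := by
      have h1 : ‖t ^ 2‖ ≤ ‖t ^ 2 + ((n : ℂ) - 1) ^ 2 / 4‖
          + ‖((n : ℂ) - 1) ^ 2 / 4‖ := by
        have h := norm_add_le (t ^ 2 + ((n : ℂ) - 1) ^ 2 / 4)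
          (-(((n : ℂ) - 1) ^ 2 / 4))
        simpa using h
      have h2 : s ^ 2 = ‖t ^ 2 + ((n : ℂ) - 1) ^ 2 / 4‖ :=
        Real.sq_sqrt (norm_nonneg _)
      rw [h2]
      rw [norm_pow] at h1
      rw [habsC] at h1
      linarith
    rw [hnp1]
    rw [div_le_div_iff₀ (by positivity) (by positivity)]
    nlinarith [sq_nonneg (s - a + c), sq_nonneg (s + a - c), mul_nonneg hs0 hc0,
      mul_nonneg ha0 hc0, mul_nonneg hs0 ha0, sq_nonneg (a - c)]
  · -- attained at i(n-1)/2
    have ht2 : (Complex.I * ((n : ℂ) - 1) / 2) ^ 2 + ((n : ℂ) - 1) ^ 2 / 4 = 0 := by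
      rw [hcc]; ring_nf; rw [Complex.I_sq]; ring
    rw [ht2]
    have habst : ‖Complex.I * ((n : ℂ) - 1) / 2‖ = c := by
      rw [hcc]
      have : Complex.I * (2 * (c : ℂ)) / 2 = Complex.I * (c : ℂ) := by ring
      rw [this, norm_mul, Complex.norm_I, Complex.norm_real, Real.norm_eq_abs, _root_.abs_of_nonneg hc0, one_mul]
    rw [habst, norm_zero, Real.sqrt_zero, hnp1]
    rw [div_eq_div_iff (by positivity) (by positivity)]
    ring
  · -- upper bound
    intro t
    set a : ℝ := ‖t‖ with ha
    have ha0 : 0 ≤ a := norm_nonneg t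
    set s : ℝ := Real.sqrt (‖t ^ 2 + ((n : ℂ) - 1) ^ 2 / 4‖) with hs
    have hsle : s ≤ a + c := by
      rw [hs]
      have h1 : ‖t ^ 2 + ((n : ℂ) - 1) ^ 2 / 4‖ ≤ (a + c) ^ 2 := by
        have := norm_add_le (t ^ 2) (((n : ℂ) - 1) ^ 2 / 4)
        rw [norm_pow, habsC] at this
        nlinarith [mul_nonneg ha0 hc0]
      calc Real.sqrt (‖t ^ 2 + ((n : ℂ) - 1) ^ 2 / 4‖)
          ≤ Real.sqrt ((a + c) ^ 2) := Real.sqrt_le_sqrt h1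
        _ = a + c := by rw [Real.sqrt_sq (by positivity)]
    rw [hnp1, div_le_div_iff₀ (by positivity) (by norm_num)]
    nlinarith [mul_nonneg ha0 hc0]
  · -- attained at 0
    have h0 : (0 : ℂ) ^ 2 + ((n : ℂ) - 1) ^ 2 / 4 = ((n : ℂ) - 1) ^ 2 / 4 := by ring
    rw [h0, habsC, Real.sqrt_sq hc0, norm_zero, hnp1]
    norm_num
end

section
/- Let ρ: ℝ → ℝ be even, nonnegative, with ∫_ℝ ρ = 1 and ∫_ℝ |ν|^{2m+2} ρ(ν) dν < ∞; let m ∈ ℕ, δ > 0. Define Ẽ(t) = H(t − m − 1/2)(t − m − 1/2)^{2m+2} − H(−t − m − 1/2)(−t − m − 1/2)^{2m+2} and ρ_δ(τ) = δρ(δτ). Then for all τ > 0, (ρ_δ * Ẽ)(τ) ≥ (τ − m − 1/2)^{2m+2} − (m + 1/2)^{2m+2} − (2m+2) ∫_ℝ |ν/δ| (m + 1/2 + |ν/δ|)^{2m+1} ρ(ν) dν. -/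
open Real MeasureTheory

/-- Positive part building block of `Etil`. -/
noncomputable def hplusCLB (a : ℝ) (n : ℕ) (t : ℝ) : ℝ :=
  if a ≤ t then (t - a) ^ n else 0

lemma hplusCLB_nonneg {a : ℝ} (n : ℕ) (t : ℝ) : 0 ≤ hplusCLB a n t := by
  unfold hplusCLB; split_ifs with h
  · exact pow_nonneg (by linarith) _
  · exact le_refl _

lemma hplusCLB_le {a : ℝ} (ha : 0 < a) (n : ℕ) (t : ℝ) :
    hplusCLB a n t ≤ (|t| + a) ^ n := by
  unfold hplusCLB
  split_ifs with h
  · exact pow_le_pow_left₀ (by linarith) (by nlinarith [le_abs_self t]) _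
  · exact pow_nonneg (by positivity) _

lemma key0CLB (k : ℕ) {a τ w : ℝ} (ha : 0 < a) (hτ : 0 < τ) (hw : 0 ≤ w) :
    (τ - a) ^ (2*k+2) - a ^ (2*k+2) - (2*(k:ℝ)+2) * (w * (a + w) ^ (2*k+1))
    ≤ (1/2) * ((hplusCLB a (2*k+2) (τ - w) - hplusCLB a (2*k+2) (-(τ - w)))
        + (hplusCLB a (2*k+2) (τ + w) - hplusCLB a (2*k+2) (-(τ + w)))) := by
  set X : ℝ := w * (a + w) ^ (2*k+1) with hX_def
  have hXnn : 0 ≤ X := mul_nonneg hw (pow_nonneg (by linarith) _)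
  have hmX : 0 ≤ 2*(k:ℝ)*X := by positivity
  have h1 : hplusCLB a (2*k+2) (-(τ + w)) = 0 := by
    unfold hplusCLB; rw [if_neg]; push_neg; linarith
  have h2 : hplusCLB a (2*k+2) (-(τ - w)) ≤ X := by
    unfold hplusCLB; split_ifs with h
    · have h0 : (0:ℝ) ≤ -(τ - w) - a := by linarith
      have hb : -(τ - w) - a ≤ w := by linarith
      have he : (-(τ - w) - a) ^ (2*k+2) = (-(τ - w) - a) * (-(τ - w) - a) ^ (2*k+1) := by
        ring
      rw [he, hX_def]
      exact mul_le_mul hb (pow_le_pow_left₀ h0 (by linarith) _) (pow_nonneg h0 _) hw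
    · exact hXnn
  have hnn1 : 0 ≤ hplusCLB a (2*k+2) (τ - w) := hplusCLB_nonneg _ _
  have hnn2 : 0 ≤ hplusCLB a (2*k+2) (τ + w) := hplusCLB_nonneg _ _
  have hapow : (0:ℝ) ≤ a ^ (2*k+2) := pow_nonneg (by linarith) _
  rcases le_or_gt τ a with hcase | hcase
  · -- τ ≤ a
    have hp : (τ - a) ^ (2*k+2) ≤ a ^ (2*k+2) := by
      have he : (τ - a) ^ (2*k+2) = (a - τ) ^ (2*k+2) := by
        rw [show τ - a = -(a - τ) by ring, Even.neg_pow ⟨k+1, by ring⟩]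
      rw [he]
      exact pow_le_pow_left₀ (by linarith) (by linarith) _
    linarith
  · rcases le_or_gt a (τ - w) with hcase2 | hcase2
    · -- a ≤ τ - w
      have h3 : hplusCLB a (2*k+2) (τ - w) = (τ - w - a) ^ (2*k+2) := if_pos hcase2
      have h4 : hplusCLB a (2*k+2) (τ + w) = (τ + w - a) ^ (2*k+2) := if_pos (by linarith)
      have h5 : hplusCLB a (2*k+2) (-(τ - w)) = 0 := by
        unfold hplusCLB; rw [if_neg]; push_neg; linarith
      have hconv := (Even.convexOn_pow (n := 2*k+2) ⟨k+1, by ring⟩).2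
        (Set.mem_univ (τ - w - a)) (Set.mem_univ (τ + w - a))
        (by norm_num : (0:ℝ) ≤ 1/2) (by norm_num : (0:ℝ) ≤ 1/2) (by norm_num)
      simp only [smul_eq_mul] at hconv
      rw [show (1/2:ℝ) * (τ - w - a) + (1/2) * (τ + w - a) = τ - a by ring] at hconv
      rw [h3, h4, h5, h1]
      linarith
    · -- τ - w < a < τ
      have hp1 : (τ - a) ^ (2*k+2) ≤ w ^ (2*k+2) :=
        pow_le_pow_left₀ (by linarith) (by linarith) _
      have hp2 : w ^ (2*k+2) ≤ X := by
        rw [show w ^ (2*k+2) = w * w ^ (2*k+1) by ring, hX_def]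
        exact mul_le_mul_of_nonneg_left (pow_le_pow_left₀ hw (by linarith) _) hw
      linarith

lemma keyCLB (k : ℕ) {a τ : ℝ} (w : ℝ) (ha : 0 < a) (hτ : 0 < τ) :
    (τ - a) ^ (2*k+2) - a ^ (2*k+2) - (2*(k:ℝ)+2) * (|w| * (a + |w|) ^ (2*k+1))
    ≤ (1/2) * ((hplusCLB a (2*k+2) (τ - w) - hplusCLB a (2*k+2) (-(τ - w)))
        + (hplusCLB a (2*k+2) (τ + w) - hplusCLB a (2*k+2) (-(τ + w)))) := by
  rcases le_total 0 w with hw | hw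
  · rw [abs_of_nonneg hw]; exact key0CLB k ha hτ hw
  · rw [abs_of_nonpos hw]
    have h := key0CLB k ha hτ (neg_nonneg.2 hw)
    rw [show τ - -w = τ + w by ring, show τ + -w = τ - w by ring] at h
    linarith

/-- Even-dimensional Fourier–Tauberian convolution lower bound. -/
theorem conv_lower_bound_even (m : ℕ) (δ : ℝ) (hδ : 0 < δ)
    (ρ : ℝ → ℝ) (hρ_even : ∀ t, ρ (-t) = ρ t) (hρ_nonneg : ∀ t, 0 ≤ ρ t)
    (hρ_int : ∫ t : ℝ, ρ t = 1)
    (hρ_moment : Integrable (fun ν : ℝ => |ν| ^ (2 * m + 2) * ρ ν))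
    (Etil : ℝ → ℝ)
    (hE : ∀ t : ℝ, Etil t =
      (if (m : ℝ) + 1/2 ≤ t then (t - m - 1/2) ^ (2 * m + 2) else 0) -
      (if (m : ℝ) + 1/2 ≤ -t then (-t - m - 1/2) ^ (2 * m + 2) else 0)) :
    ∀ τ : ℝ, 0 < τ →
      (τ - m - 1/2) ^ (2 * m + 2) - ((m : ℝ) + 1/2) ^ (2 * m + 2) -
          (2 * m + 2) * ∫ ν : ℝ, |ν / δ| * ((m : ℝ) + 1/2 + |ν / δ|) ^ (2 * m + 1) * ρ ν
        ≤ ∫ s : ℝ, Etil (τ - s) * (δ * ρ (δ * s)) := by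
  intro τ hτ
  have han : (0:ℝ) < (m:ℝ) + 1/2 := by positivity
  have hρI : Integrable ρ := by
    by_contra h
    rw [integral_undef h] at hρ_int
    norm_num at hρ_int
  have hEt : ∀ t, Etil t =
      hplusCLB ((m:ℝ)+1/2) (2*m+2) t - hplusCLB ((m:ℝ)+1/2) (2*m+2) (-t) := by
    intro t; rw [hE t]; unfold hplusCLB; split_ifs <;> ring
  -- master dominating function integrability
  have hLn : Integrable (fun ν : ℝ => (1+|ν|)^(2*m+2) * ρ ν) := by
    refine Integrable.mono'
      ((hρI.const_mul (2^(2*m+2))).add (hρ_moment.const_mul (2^(2*m+2)))) ?_ ?_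
    · exact (((continuous_const.add continuous_abs).pow _).aestronglyMeasurable).mul hρI.1
    · filter_upwards with ν
      rw [Real.norm_eq_abs]
      have hbnd : (1+|ν|)^(2*m+2) ≤ 2^(2*m+2) * (1 + |ν|^(2*m+2)) := by
        rcases le_total (|ν|) 1 with h | h
        · have h1 : (1+|ν|)^(2*m+2) ≤ 2^(2*m+2) :=
            pow_le_pow_left₀ (by positivity) (by linarith) _
          nlinarith [pow_nonneg (abs_nonneg ν) (2*m+2),
            pow_pos (show (0:ℝ)<2 by norm_num) (2*m+2)]
        · have h1 : (1+|ν|)^(2*m+2) ≤ (2*|ν|)^(2*m+2) :=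
            pow_le_pow_left₀ (by positivity) (by linarith) _
          rw [mul_pow] at h1
          nlinarith [pow_pos (show (0:ℝ)<2 by norm_num) (2*m+2)]
      calc |(1+|ν|)^(2*m+2) * ρ ν| = (1+|ν|)^(2*m+2) * ρ ν :=
            abs_of_nonneg (mul_nonneg (by positivity) (hρ_nonneg ν))
        _ ≤ (2^(2*m+2) * (1 + |ν|^(2*m+2))) * ρ ν :=
            mul_le_mul_of_nonneg_right hbnd (hρ_nonneg ν)
        _ = 2^(2*m+2) * ρ ν + 2^(2*m+2) * (|ν|^(2*m+2) * ρ ν) := by ring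
  have hLnδ : Integrable (fun s : ℝ => (1+|s|)^(2*m+2) * (δ * ρ (δ * s))) := by
    have hM : ∀ ν : ℝ, 1 + |ν/δ| ≤ (max 1 δ⁻¹) * (1 + |ν|) := by
      intro ν
      have h1 : (1:ℝ) ≤ max 1 δ⁻¹ := le_max_left _ _
      have h2 : δ⁻¹ ≤ max 1 δ⁻¹ := le_max_right _ _
      have h3 : |ν/δ| = δ⁻¹ * |ν| := by
        rw [abs_div, abs_of_pos hδ]; ring
      nlinarith [abs_nonneg ν]
    have h1 : Integrable (fun ν : ℝ => (1+|ν/δ|)^(2*m+2) * ρ ν) := by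
      refine Integrable.mono' (hLn.const_mul ((max 1 δ⁻¹)^(2*m+2))) ?_ ?_
      · exact ((continuous_const.add
          (continuous_abs.comp (continuous_id.div_const δ))).pow _).aestronglyMeasurable.mul hρI.1
      · filter_upwards with ν
        rw [Real.norm_eq_abs]
        calc |(1+|ν/δ|)^(2*m+2) * ρ ν| = (1+|ν/δ|)^(2*m+2) * ρ ν :=
              abs_of_nonneg (mul_nonneg (by positivity) (hρ_nonneg ν))
          _ ≤ ((max 1 δ⁻¹) * (1+|ν|))^(2*m+2) * ρ ν :=
              mul_le_mul_of_nonneg_right (pow_le_pow_left₀ (by positivity) (hM ν) _) (hρ_nonneg ν)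
          _ = (max 1 δ⁻¹)^(2*m+2) * ((1+|ν|)^(2*m+2) * ρ ν) := by rw [mul_pow]; ring
    have h2 := (h1.comp_mul_left' hδ.ne').const_mul δ
    refine h2.congr (Filter.Eventually.of_forall fun s => ?_)
    simp only
    rw [mul_div_cancel_left₀ s hδ.ne']
    ring
  have hbase : ∀ (C : ℝ) (f : ℝ → ℝ), AEStronglyMeasurable f volume →
      (∀ s, |f s| ≤ C * ((1+|s|)^(2*m+2) * (δ * ρ (δ * s)))) → Integrable f := by
    intro C f hf hb
    refine (hLnδ.const_mul C).mono' hf (Filter.Eventually.of_forall fun s => ?_)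
    rw [Real.norm_eq_abs]
    exact hb s
  have hplus_meas : Measurable (hplusCLB ((m:ℝ)+1/2) (2*m+2)) := by
    unfold hplusCLB
    exact Measurable.ite (measurableSet_le measurable_const measurable_id)
      (by fun_prop) measurable_const
  have hD_aesm : AEStronglyMeasurable (fun s : ℝ => δ * ρ (δ * s)) volume :=
    ((hρI.comp_mul_left' hδ.ne').aestronglyMeasurable).const_mul δ
  have hDnn : ∀ s : ℝ, 0 ≤ δ * ρ (δ * s) := fun s => mul_nonneg hδ.le (hρ_nonneg _)
  have hE'_bound : ∀ t : ℝ,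
      |hplusCLB ((m:ℝ)+1/2) (2*m+2) t - hplusCLB ((m:ℝ)+1/2) (2*m+2) (-t)|
        ≤ (|t| + ((m:ℝ)+1/2))^(2*m+2) := by
    intro t
    have h1 := hplusCLB_le han (2*m+2) t
    have h2 := hplusCLB_le han (2*m+2) (-t)
    rw [abs_neg] at h2
    have h3 := hplusCLB_nonneg (a := (m:ℝ)+1/2) (2*m+2) t
    have h4 := hplusCLB_nonneg (a := (m:ℝ)+1/2) (2*m+2) (-t)
    rw [abs_le]; constructor <;> linarith
  -- integrability of the four integrands
  have hf1 : Integrable (fun s : ℝ =>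
      (hplusCLB ((m:ℝ)+1/2) (2*m+2) (τ - s) - hplusCLB ((m:ℝ)+1/2) (2*m+2) (-(τ - s)))
        * (δ * ρ (δ * s))) := by
    refine hbase ((|τ| + ((m:ℝ)+1/2) + 1)^(2*m+2)) _
      (((hplus_meas.comp (measurable_const.sub measurable_id)).sub
        (hplus_meas.comp ((measurable_const.sub measurable_id).neg))).aestronglyMeasurable.mul
        hD_aesm) (fun s => ?_)
    rw [abs_mul, abs_of_nonneg (hDnn s)]
    have h1 := hE'_bound (τ - s)
    have h2 : (|τ - s| + ((m:ℝ)+1/2))^(2*m+2)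
        ≤ ((|τ| + ((m:ℝ)+1/2) + 1)*(1+|s|))^(2*m+2) := by
      apply pow_le_pow_left₀ (by positivity)
      have h3 := abs_sub τ s
      nlinarith [abs_nonneg s, abs_nonneg τ]
    calc |hplusCLB ((m:ℝ)+1/2) (2*m+2) (τ - s) - hplusCLB ((m:ℝ)+1/2) (2*m+2) (-(τ - s))|
          * (δ * ρ (δ * s))
        ≤ (|τ - s| + ((m:ℝ)+1/2))^(2*m+2) * (δ * ρ (δ * s)) :=
          mul_le_mul_of_nonneg_right h1 (hDnn s)
      _ ≤ ((|τ| + ((m:ℝ)+1/2) + 1)*(1+|s|))^(2*m+2) * (δ * ρ (δ * s)) :=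
          mul_le_mul_of_nonneg_right h2 (hDnn s)
      _ = (|τ| + ((m:ℝ)+1/2) + 1)^(2*m+2) * ((1+|s|)^(2*m+2) * (δ * ρ (δ * s))) := by
          rw [mul_pow]; ring
  have hf2 : Integrable (fun s : ℝ =>
      (hplusCLB ((m:ℝ)+1/2) (2*m+2) (τ + s) - hplusCLB ((m:ℝ)+1/2) (2*m+2) (-(τ + s)))
        * (δ * ρ (δ * s))) := by
    refine hbase ((|τ| + ((m:ℝ)+1/2) + 1)^(2*m+2)) _
      (((hplus_meas.comp (measurable_const.add measurable_id)).sub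
        (hplus_meas.comp ((measurable_const.add measurable_id).neg))).aestronglyMeasurable.mul
        hD_aesm) (fun s => ?_)
    rw [abs_mul, abs_of_nonneg (hDnn s)]
    have h1 := hE'_bound (τ + s)
    have h2 : (|τ + s| + ((m:ℝ)+1/2))^(2*m+2)
        ≤ ((|τ| + ((m:ℝ)+1/2) + 1)*(1+|s|))^(2*m+2) := by
      apply pow_le_pow_left₀ (by positivity)
      have h3 := abs_add_le τ s
      nlinarith [abs_nonneg s, abs_nonneg τ]
    calc |hplusCLB ((m:ℝ)+1/2) (2*m+2) (τ + s) - hplusCLB ((m:ℝ)+1/2) (2*m+2) (-(τ + s))|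
          * (δ * ρ (δ * s))
        ≤ (|τ + s| + ((m:ℝ)+1/2))^(2*m+2) * (δ * ρ (δ * s)) :=
          mul_le_mul_of_nonneg_right h1 (hDnn s)
      _ ≤ ((|τ| + ((m:ℝ)+1/2) + 1)*(1+|s|))^(2*m+2) * (δ * ρ (δ * s)) :=
          mul_le_mul_of_nonneg_right h2 (hDnn s)
      _ = (|τ| + ((m:ℝ)+1/2) + 1)^(2*m+2) * ((1+|s|)^(2*m+2) * (δ * ρ (δ * s))) := by
          rw [mul_pow]; ring
  have hφ : Integrable (fun s : ℝ =>
      (|s| * (((m:ℝ)+1/2) + |s|)^(2*m+1)) * (δ * ρ (δ * s))) := by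
    refine hbase ((((m:ℝ)+1/2) + 1)^(2*m+2)) _
      (((measurable_abs.mul ((measurable_const.add measurable_abs).pow_const _)).aestronglyMeasurable).mul
        hD_aesm) (fun s => ?_)
    rw [abs_mul, abs_of_nonneg (hDnn s),
      abs_of_nonneg (mul_nonneg (abs_nonneg s) (pow_nonneg (by positivity) _))]
    have h1 : |s| * (((m:ℝ)+1/2) + |s|)^(2*m+1) ≤ (((m:ℝ)+1/2) + |s|)^(2*m+2) := by
      rw [show (((m:ℝ)+1/2) + |s|)^(2*m+2)
          = (((m:ℝ)+1/2) + |s|) * (((m:ℝ)+1/2) + |s|)^(2*m+1) by ring]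
      exact mul_le_mul_of_nonneg_right (by linarith [abs_nonneg s])
        (pow_nonneg (by positivity) _)
    have h2 : (((m:ℝ)+1/2) + |s|)^(2*m+2) ≤ ((((m:ℝ)+1/2) + 1)*(1+|s|))^(2*m+2) :=
      pow_le_pow_left₀ (by positivity) (by nlinarith [abs_nonneg s]) _
    calc (|s| * (((m:ℝ)+1/2) + |s|)^(2*m+1)) * (δ * ρ (δ * s))
        ≤ (((m:ℝ)+1/2) + |s|)^(2*m+2) * (δ * ρ (δ * s)) :=
          mul_le_mul_of_nonneg_right h1 (hDnn s)
      _ ≤ ((((m:ℝ)+1/2) + 1)*(1+|s|))^(2*m+2) * (δ * ρ (δ * s)) :=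
          mul_le_mul_of_nonneg_right h2 (hDnn s)
      _ = (((m:ℝ)+1/2) + 1)^(2*m+2) * ((1+|s|)^(2*m+2) * (δ * ρ (δ * s))) := by
          rw [mul_pow]; ring
  have hψ : Integrable (fun s : ℝ => δ * ρ (δ * s)) :=
    (hρI.comp_mul_left' hδ.ne').const_mul δ
  -- symmetry
  have hsym : (∫ s : ℝ,
      (hplusCLB ((m:ℝ)+1/2) (2*m+2) (τ + s) - hplusCLB ((m:ℝ)+1/2) (2*m+2) (-(τ + s)))
        * (δ * ρ (δ * s)))
      = ∫ s : ℝ,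
      (hplusCLB ((m:ℝ)+1/2) (2*m+2) (τ - s) - hplusCLB ((m:ℝ)+1/2) (2*m+2) (-(τ - s)))
        * (δ * ρ (δ * s)) := by
    rw [← integral_neg_eq_self (fun s : ℝ =>
      (hplusCLB ((m:ℝ)+1/2) (2*m+2) (τ + s) - hplusCLB ((m:ℝ)+1/2) (2*m+2) (-(τ + s)))
        * (δ * ρ (δ * s))) volume]
    congr 1
    funext s
    rw [show τ + -s = τ - s by ring, show δ * -s = -(δ * s) by ring, hρ_even]
  -- averaging
  have hadd : ∫ s : ℝ,
      ((hplusCLB ((m:ℝ)+1/2) (2*m+2) (τ - s) - hplusCLB ((m:ℝ)+1/2) (2*m+2) (-(τ - s)))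
        + (hplusCLB ((m:ℝ)+1/2) (2*m+2) (τ + s) - hplusCLB ((m:ℝ)+1/2) (2*m+2) (-(τ + s))))
        * (δ * ρ (δ * s))
      = (∫ s : ℝ,
          (hplusCLB ((m:ℝ)+1/2) (2*m+2) (τ - s) - hplusCLB ((m:ℝ)+1/2) (2*m+2) (-(τ - s)))
            * (δ * ρ (δ * s)))
        + ∫ s : ℝ,
          (hplusCLB ((m:ℝ)+1/2) (2*m+2) (τ + s) - hplusCLB ((m:ℝ)+1/2) (2*m+2) (-(τ + s)))
            * (δ * ρ (δ * s)) := by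
    rw [← integral_add hf1 hf2]
    congr 1; funext s; ring
  have havg : (∫ s : ℝ,
      (hplusCLB ((m:ℝ)+1/2) (2*m+2) (τ - s) - hplusCLB ((m:ℝ)+1/2) (2*m+2) (-(τ - s)))
        * (δ * ρ (δ * s)))
      = ∫ s : ℝ, (1/2 : ℝ) *
        (((hplusCLB ((m:ℝ)+1/2) (2*m+2) (τ - s) - hplusCLB ((m:ℝ)+1/2) (2*m+2) (-(τ - s)))
          + (hplusCLB ((m:ℝ)+1/2) (2*m+2) (τ + s) - hplusCLB ((m:ℝ)+1/2) (2*m+2) (-(τ + s))))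
          * (δ * ρ (δ * s))) := by
    rw [integral_const_mul, hadd, hsym]; ring
  -- pointwise inequality integrated
  have hIneqInt : (∫ s : ℝ,
      ((τ - ((m:ℝ)+1/2))^(2*m+2) - ((m:ℝ)+1/2)^(2*m+2)
        - (2*(m:ℝ)+2) * (|s| * (((m:ℝ)+1/2) + |s|)^(2*m+1))) * (δ * ρ (δ * s)))
      ≤ ∫ s : ℝ, (1/2 : ℝ) *
        (((hplusCLB ((m:ℝ)+1/2) (2*m+2) (τ - s) - hplusCLB ((m:ℝ)+1/2) (2*m+2) (-(τ - s)))
          + (hplusCLB ((m:ℝ)+1/2) (2*m+2) (τ + s) - hplusCLB ((m:ℝ)+1/2) (2*m+2) (-(τ + s))))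
          * (δ * ρ (δ * s))) := by
    refine integral_mono ?_ ?_ ?_
    · refine ((hψ.const_mul ((τ - ((m:ℝ)+1/2))^(2*m+2) - ((m:ℝ)+1/2)^(2*m+2))).sub
        (hφ.const_mul (2*(m:ℝ)+2))).congr (Filter.Eventually.of_forall fun s => ?_)
      simp only [Pi.sub_apply]
      ring
    · refine ((hf1.add hf2).const_mul (1/2)).congr (Filter.Eventually.of_forall fun s => ?_)
      simp only [Pi.add_apply]
      ring
    · intro s
      have hk := keyCLB m (a := ((m:ℝ)+1/2)) (τ := τ) s han hτ
      have := mul_le_mul_of_nonneg_right hk (hDnn s)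
      calc ((τ - ((m:ℝ)+1/2))^(2*m+2) - ((m:ℝ)+1/2)^(2*m+2)
            - (2*(m:ℝ)+2) * (|s| * (((m:ℝ)+1/2) + |s|)^(2*m+1))) * (δ * ρ (δ * s))
          ≤ ((1/2) * ((hplusCLB ((m:ℝ)+1/2) (2*m+2) (τ - s)
              - hplusCLB ((m:ℝ)+1/2) (2*m+2) (-(τ - s)))
            + (hplusCLB ((m:ℝ)+1/2) (2*m+2) (τ + s)
              - hplusCLB ((m:ℝ)+1/2) (2*m+2) (-(τ + s))))) * (δ * ρ (δ * s)) := this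
        _ = (1/2 : ℝ) *
            (((hplusCLB ((m:ℝ)+1/2) (2*m+2) (τ - s) - hplusCLB ((m:ℝ)+1/2) (2*m+2) (-(τ - s)))
              + (hplusCLB ((m:ℝ)+1/2) (2*m+2) (τ + s)
                - hplusCLB ((m:ℝ)+1/2) (2*m+2) (-(τ + s))))
              * (δ * ρ (δ * s))) := by ring
  -- computation of the lower integral
  have hDint : ∫ s : ℝ, δ * ρ (δ * s) = 1 := by
    rw [integral_const_mul, Measure.integral_comp_mul_left ρ δ, hρ_int, smul_eq_mul,
      abs_of_pos (inv_pos.2 hδ)]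
    field_simp
  have hGint : (∫ s : ℝ, (|s| * (((m:ℝ)+1/2) + |s|)^(2*m+1)) * (δ * ρ (δ * s)))
      = ∫ ν : ℝ, |ν / δ| * (((m:ℝ)+1/2) + |ν / δ|)^(2*m+1) * ρ ν := by
    have hG := Measure.integral_comp_mul_left
      (fun ν : ℝ => |ν / δ| * (((m:ℝ)+1/2) + |ν / δ|)^(2*m+1) * ρ ν) δ
    calc (∫ s : ℝ, (|s| * (((m:ℝ)+1/2) + |s|)^(2*m+1)) * (δ * ρ (δ * s)))
        = ∫ s : ℝ, δ * ((fun ν : ℝ =>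
            |ν / δ| * (((m:ℝ)+1/2) + |ν / δ|)^(2*m+1) * ρ ν) (δ * s)) := by
          congr 1; funext s
          simp only
          rw [mul_div_cancel_left₀ s hδ.ne']
          ring
      _ = δ * ∫ s : ℝ, (fun ν : ℝ =>
            |ν / δ| * (((m:ℝ)+1/2) + |ν / δ|)^(2*m+1) * ρ ν) (δ * s) := integral_const_mul _ _
      _ = δ * (|δ⁻¹| • ∫ ν : ℝ, |ν / δ| * (((m:ℝ)+1/2) + |ν / δ|)^(2*m+1) * ρ ν) := by
          rw [hG]
      _ = ∫ ν : ℝ, |ν / δ| * (((m:ℝ)+1/2) + |ν / δ|)^(2*m+1) * ρ ν := by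
          rw [smul_eq_mul, abs_of_pos (inv_pos.2 hδ), ← mul_assoc,
            mul_inv_cancel₀ hδ.ne', one_mul]
  have hLint : (∫ s : ℝ,
      ((τ - ((m:ℝ)+1/2))^(2*m+2) - ((m:ℝ)+1/2)^(2*m+2)
        - (2*(m:ℝ)+2) * (|s| * (((m:ℝ)+1/2) + |s|)^(2*m+1))) * (δ * ρ (δ * s)))
      = ((τ - ((m:ℝ)+1/2))^(2*m+2) - ((m:ℝ)+1/2)^(2*m+2))
        - (2*(m:ℝ)+2) * ∫ ν : ℝ, |ν / δ| * (((m:ℝ)+1/2) + |ν / δ|)^(2*m+1) * ρ ν := by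
    calc (∫ s : ℝ,
        ((τ - ((m:ℝ)+1/2))^(2*m+2) - ((m:ℝ)+1/2)^(2*m+2)
          - (2*(m:ℝ)+2) * (|s| * (((m:ℝ)+1/2) + |s|)^(2*m+1))) * (δ * ρ (δ * s)))
        = ∫ s : ℝ,
          (((τ - ((m:ℝ)+1/2))^(2*m+2) - ((m:ℝ)+1/2)^(2*m+2)) * (δ * ρ (δ * s))
            - (2*(m:ℝ)+2) * ((|s| * (((m:ℝ)+1/2) + |s|)^(2*m+1)) * (δ * ρ (δ * s)))) := by
          congr 1; funext s; ring
      _ = (∫ s : ℝ, ((τ - ((m:ℝ)+1/2))^(2*m+2) - ((m:ℝ)+1/2)^(2*m+2)) * (δ * ρ (δ * s)))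
          - ∫ s : ℝ, (2*(m:ℝ)+2) * ((|s| * (((m:ℝ)+1/2) + |s|)^(2*m+1)) * (δ * ρ (δ * s))) :=
          integral_sub (hψ.const_mul _) (hφ.const_mul _)
      _ = ((τ - ((m:ℝ)+1/2))^(2*m+2) - ((m:ℝ)+1/2)^(2*m+2)) * (∫ s : ℝ, δ * ρ (δ * s))
          - (2*(m:ℝ)+2) * ∫ s : ℝ, (|s| * (((m:ℝ)+1/2) + |s|)^(2*m+1)) * (δ * ρ (δ * s)) := by
          rw [integral_const_mul ((τ - ((m:ℝ)+1/2))^(2*m+2) - ((m:ℝ)+1/2)^(2*m+2)),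
            integral_const_mul (2*(m:ℝ)+2)]
      _ = ((τ - ((m:ℝ)+1/2))^(2*m+2) - ((m:ℝ)+1/2)^(2*m+2))
          - (2*(m:ℝ)+2) * ∫ ν : ℝ, |ν / δ| * (((m:ℝ)+1/2) + |ν / δ|)^(2*m+1) * ρ ν := by
          rw [hDint, hGint, mul_one]
  -- final assembly
  simp_rw [hEt]
  calc (τ - (m:ℝ) - 1/2) ^ (2 * m + 2) - ((m : ℝ) + 1/2) ^ (2 * m + 2) -
        (2 * (m:ℝ) + 2) * ∫ ν : ℝ, |ν / δ| * ((m : ℝ) + 1/2 + |ν / δ|) ^ (2 * m + 1) * ρ ν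
      = ((τ - ((m:ℝ)+1/2))^(2*m+2) - ((m:ℝ)+1/2)^(2*m+2))
        - (2*(m:ℝ)+2) * ∫ ν : ℝ, |ν / δ| * (((m:ℝ)+1/2) + |ν / δ|)^(2*m+1) * ρ ν := by
        ring
    _ = ∫ s : ℝ,
        ((τ - ((m:ℝ)+1/2))^(2*m+2) - ((m:ℝ)+1/2)^(2*m+2)
          - (2*(m:ℝ)+2) * (|s| * (((m:ℝ)+1/2) + |s|)^(2*m+1))) * (δ * ρ (δ * s)) := hLint.symm
    _ ≤ ∫ s : ℝ, (1/2 : ℝ) *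
        (((hplusCLB ((m:ℝ)+1/2) (2*m+2) (τ - s) - hplusCLB ((m:ℝ)+1/2) (2*m+2) (-(τ - s)))
          + (hplusCLB ((m:ℝ)+1/2) (2*m+2) (τ + s) - hplusCLB ((m:ℝ)+1/2) (2*m+2) (-(τ + s))))
          * (δ * ρ (δ * s))) := hIneqInt
    _ = ∫ s : ℝ,
        (hplusCLB ((m:ℝ)+1/2) (2*m+2) (τ - s) - hplusCLB ((m:ℝ)+1/2) (2*m+2) (-(τ - s)))
          * (δ * ρ (δ * s)) := havg.symm
end
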